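/- Conversely, if every unfolding X_{(k)} of a tensor X ∈ ℝ^{n₁×⋯×n_d} has rank at most r_k for k = 1,…,d-1, then there exists an exact tensor-train decomposition of X with TT-ranks at most r₁,…,r_{d-1}, in the case d = 3: if X_{(1)} has rank ≤ r₁ and X_{(2)} has rank ≤ r₂, then there exist T⁽¹⁾ ∈ ℝ^{1×n₁×r₁}, T⁽²⁾ ∈ ℝ^{r₁×n₂×r₂}, T⁽³⁾ ∈ ℝ^{r₂×n₃×1} with X_{i₁,i₂,i₃} = Σ_{j₁,j₂} T⁽¹⁾_{1,i₁,j₁} T⁽²⁾_{j₁,i₂,j₂} T⁽³⁾_{j₂,i₃,1}. -/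

import Mathlib

open Matrix

private lemma sum_padded {r m : ℕ} (h : m ≤ r) (f : Fin r → ℝ)
    (hf : ∀ j : Fin r, m ≤ (j : ℕ) → f j = 0) :
    ∑ j, f j = ∑ j : Fin m, f (Fin.castLE h j) := by
  classical
  set g : ℕ → ℝ := fun i => if hi : i < r then f ⟨i, hi⟩ else 0 with hg
  have h1 : ∑ j : Fin r, f j = ∑ i ∈ Finset.range r, g i := by
    rw [← Fin.sum_univ_eq_sum_range g r]
    exact Finset.sum_congr rfl fun j _ => by simp [hg, Fin.is_lt j]
  have h2 : ∑ j : Fin m, f (Fin.castLE h j) = ∑ i ∈ Finset.range m, g i := by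
    rw [← Fin.sum_univ_eq_sum_range g m]
    refine Finset.sum_congr rfl fun j _ => ?_
    have hj : (j : ℕ) < r := lt_of_lt_of_le j.is_lt h
    simp [hg, hj]
    rfl
  rw [h1, h2]
  symm
  apply Finset.sum_subset (Finset.range_subset_range.2 h)
  intro i hi hni
  have hir : i < r := Finset.mem_range.1 hi
  have him : m ≤ i := le_of_not_gt (fun hl => hni (Finset.mem_range.2 hl))
  simp [hg, hir, hf ⟨i, hir⟩ him]

/-- Existence of a TT decomposition for `d = 3`: if the unfoldings `X_(1)` and `X_(2)` of a
tensor `X ∈ ℝ^{n₁×n₂×n₃}` have ranks at most `r₁` and `r₂` respectively, then `X` admits an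
exact tensor-train decomposition with ranks `r₁, r₂`. -/
theorem stmt_14 (n₁ n₂ n₃ r₁ r₂ : ℕ)
    (X : Fin n₁ → Fin n₂ → Fin n₃ → ℝ)
    (X1 : Matrix (Fin n₁) (Fin n₂ × Fin n₃) ℝ)
    (hX1 : ∀ i jk, X1 i jk = X i jk.1 jk.2)
    (X2 : Matrix (Fin n₁ × Fin n₂) (Fin n₃) ℝ)
    (hX2 : ∀ ij k, X2 ij k = X ij.1 ij.2 k)
    (h1 : X1.rank ≤ r₁) (h2 : X2.rank ≤ r₂) :
    ∃ (T₁ : Fin 1 → Fin n₁ → Fin r₁ → ℝ) (T₂ : Fin r₁ → Fin n₂ → Fin r₂ → ℝ)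
      (T₃ : Fin r₂ → Fin n₃ → Fin 1 → ℝ),
      ∀ i₁ i₂ i₃, X i₁ i₂ i₃ = ∑ j₁, ∑ j₂, T₁ 0 i₁ j₁ * T₂ j₁ i₂ j₂ * T₃ j₂ i₃ 0 := by
  classical
  set V : Submodule ℝ (Fin n₁ → ℝ) := Submodule.span ℝ (Set.range X1ᵀ) with hV
  set W : Submodule ℝ (Fin n₁ × Fin n₂ → ℝ) := Submodule.span ℝ (Set.range X2ᵀ) with hW
  have hm₁ : Module.finrank ℝ V ≤ r₁ := by
    rw [hV]; exact (Matrix.rank_eq_finrank_span_cols X1).symm.trans_le h1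
  have hm₂ : Module.finrank ℝ W ≤ r₂ := by
    rw [hW]; exact (Matrix.rank_eq_finrank_span_cols X2).symm.trans_le h2
  set m₁ := Module.finrank ℝ V with hm1def
  set m₂ := Module.finrank ℝ W with hm2def
  let b : Module.Basis (Fin m₁) ℝ V := Module.finBasis ℝ V
  let p : Module.Basis (Fin m₂) ℝ W := Module.finBasis ℝ W
  have hcol1 : ∀ i₂ i₃, (fun i => X i i₂ i₃) ∈ V := by
    intro i₂ i₃
    have h : X1ᵀ (i₂, i₃) ∈ V := Submodule.subset_span ⟨(i₂, i₃), rfl⟩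
    have he : (fun i => X i i₂ i₃) = X1ᵀ (i₂, i₃) := funext fun i => (hX1 i (i₂, i₃)).symm
    rw [he]; exact h
  have hcol2 : ∀ i₃, (fun ij : Fin n₁ × Fin n₂ => X ij.1 ij.2 i₃) ∈ W := by
    intro i₃
    have h : X2ᵀ i₃ ∈ W := Submodule.subset_span ⟨i₃, rfl⟩
    have he : (fun ij : Fin n₁ × Fin n₂ => X ij.1 ij.2 i₃) = X2ᵀ i₃ :=
      funext fun ij => (hX2 ij i₃).symm
    rw [he]; exact h
  let S : Fin n₂ → (Fin n₁ × Fin n₂ → ℝ) →ₗ[ℝ] (Fin n₁ → ℝ) :=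
    fun i₂ => LinearMap.funLeft ℝ ℝ (fun i => (i, i₂))
  have hS : ∀ (i₂ : Fin n₂) (w : W), S i₂ (w : Fin n₁ × Fin n₂ → ℝ) ∈ V := by
    intro i₂ w
    have hw : (w : Fin n₁ × Fin n₂ → ℝ) ∈ Submodule.span ℝ (Set.range X2ᵀ) := w.2
    refine Submodule.span_induction ?_ ?_ ?_ ?_ hw
    · rintro x ⟨i₃, rfl⟩
      have he : S i₂ (X2ᵀ i₃) = fun i => X i i₂ i₃ := by
        funext i
        simp [S, LinearMap.funLeft, Matrix.transpose_apply, hX2]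
      rw [he]; exact hcol1 i₂ i₃
    · simp
    · intro x y _ _ hx hy
      rw [map_add]; exact V.add_mem hx hy
    · intro c x _ hx
      rw [_root_.map_smul]; exact V.smul_mem c hx
  let pV : Fin n₂ → Fin m₂ → V :=
    fun i₂ k => ⟨S i₂ ((p k : W) : Fin n₁ × Fin n₂ → ℝ), hS i₂ (p k)⟩
  -- expansion of columns of X2 in the basis p
  have hexp2 : ∀ (i₃ : Fin n₃) (ij : Fin n₁ × Fin n₂),
      X ij.1 ij.2 i₃ = ∑ k : Fin m₂,
        p.repr ⟨fun ij => X ij.1 ij.2 i₃, hcol2 i₃⟩ k * ((p k : W) : Fin n₁ × Fin n₂ → ℝ) ij := by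
    intro i₃ ij
    have h := congrArg Subtype.val (p.sum_repr ⟨fun ij => X ij.1 ij.2 i₃, hcol2 i₃⟩)
    have h2 := congrFun h ij
    simp only [AddSubmonoidClass.coe_finset_sum] at h2
    rw [Finset.sum_apply] at h2
    simp only [Submodule.coe_smul, Pi.smul_apply, smul_eq_mul] at h2
    exact h2.symm
  -- the key identity in V
  have hVsum : ∀ (i₂ : Fin n₂) (i₃ : Fin n₃),
      (⟨fun i => X i i₂ i₃, hcol1 i₂ i₃⟩ : V) =
        ∑ k : Fin m₂, p.repr ⟨fun ij => X ij.1 ij.2 i₃, hcol2 i₃⟩ k • pV i₂ k := by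
    intro i₂ i₃
    apply Subtype.ext
    funext i
    simp only [AddSubmonoidClass.coe_finset_sum]
    rw [Finset.sum_apply]
    simp only [Submodule.coe_smul, Pi.smul_apply, smul_eq_mul]
    exact hexp2 i₃ (i, i₂)
  have hrepr : ∀ (i₂ : Fin n₂) (i₃ : Fin n₃) (j : Fin m₁),
      b.repr ⟨fun i => X i i₂ i₃, hcol1 i₂ i₃⟩ j =
        ∑ k : Fin m₂, p.repr ⟨fun ij => X ij.1 ij.2 i₃, hcol2 i₃⟩ k * b.repr (pV i₂ k) j := by
    intro i₂ i₃ j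
    rw [hVsum i₂ i₃, map_sum]
    rw [Finsupp.finset_sum_apply]
    refine Finset.sum_congr rfl fun k _ => ?_
    rw [_root_.map_smul]
    simp
  -- expansion of columns of X1 in the basis b
  have hexp1 : ∀ (i₂ : Fin n₂) (i₃ : Fin n₃) (i₁ : Fin n₁),
      X i₁ i₂ i₃ = ∑ j : Fin m₁,
        b.repr ⟨fun i => X i i₂ i₃, hcol1 i₂ i₃⟩ j * ((b j : V) : Fin n₁ → ℝ) i₁ := by
    intro i₂ i₃ i₁
    have h := congrArg Subtype.val (b.sum_repr ⟨fun i => X i i₂ i₃, hcol1 i₂ i₃⟩)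
    have h2 := congrFun h i₁
    simp only [AddSubmonoidClass.coe_finset_sum] at h2
    rw [Finset.sum_apply] at h2
    simp only [Submodule.coe_smul, Pi.smul_apply, smul_eq_mul] at h2
    exact h2.symm
  refine ⟨fun _ i₁ j => if h : (j : ℕ) < m₁ then ((b ⟨j, h⟩ : V) : Fin n₁ → ℝ) i₁ else 0,
    fun j i₂ k => if hj : (j : ℕ) < m₁ then
      (if hk : (k : ℕ) < m₂ then b.repr (pV i₂ ⟨k, hk⟩) ⟨j, hj⟩ else 0) else 0,
    fun k i₃ _ => if hk : (k : ℕ) < m₂ then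
      p.repr ⟨fun ij => X ij.1 ij.2 i₃, hcol2 i₃⟩ ⟨k, hk⟩ else 0, ?_⟩
  intro i₁ i₂ i₃
  rw [hexp1 i₂ i₃ i₁]
  rw [sum_padded hm₁ _ (fun j hj => Finset.sum_eq_zero fun k _ => by
    simp only [dif_neg (not_lt.2 hj)]; ring)]
  refine Finset.sum_congr rfl fun j _ => ?_
  rw [sum_padded hm₂ _ (fun k hk => by
    simp only [dif_neg (not_lt.2 hk)]; ring)]
  rw [hrepr i₂ i₃ j, Finset.sum_mul]
  refine Finset.sum_congr rfl fun k _ => ?_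
  simp only [Fin.coe_castLE, dif_pos (Fin.is_lt j), dif_pos (Fin.is_lt k), Fin.eta]
  ring
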